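/- Consider a repetitive process y_k = G u_k + w + d_k with G ∈ ℝ^{m×n}, w ∈ ℝ^m, and disturbances d_k ∈ D, where D ⊆ ℝ^m is bounded. Let U ⊆ ℝ^n, Y ⊆ ℝ^m, let X ⊆ ℝ^n be a nonempty closed convex set such that every u ∈ X satisfies u ∈ U and G u + w + d ∈ Y for all d ∈ D. Let W ∈ ℝ^{n×n} be symmetric positive definite, M ∈ ℝ^{m×n}, Q ∈ ℝ^{m×m}, H̃ ∈ ℝ^{n×n}, f̃ ∈ ℝ^n, F̃(u) = H̃u + f̃, and suppose μ̃ > 0, L̃ > 0 satisfy μ̃‖d‖_W² ≤ dᵀH̃d and ‖W^{-1}H̃d‖_W ≤ L̃‖d‖_W for all d ∈ ℝ^n, with step size α ∈ (0, 2μ̃/L̃²). Let ū ∈ X satisfy ⟨F̃(ū), v − ū⟩ ≥ 0 for all v ∈ X. Generate iterates by u_0 ∈ X and u_{k+1} = the W-weighted projection onto X of u_k − αW^{-1}(F̃(u_k) + MᵀQ d_k). Then for all k ≥ 0: u_k ∈ U, G u_k + w + d_k ∈ Y, and ‖u_k − ū‖_W ≤ η^k ‖u_0 − ū‖_W + γ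 · sup_{j≥0}‖d_j‖, where η = √(1 − 2αμ̃ + α²L̃²) ∈ [0,1) and γ = α‖W^{-1/2}MᵀQ‖/(1 − η). -/

import Mathlib

open Matrix Finset

noncomputable def wip {n : ℕ} (W : Matrix (Fin n) (Fin n) ℝ) (x y : Fin n → ℝ) : ℝ :=
  x ⬝ᵥ W.mulVec y
noncomputable def wnorm {n : ℕ} (W : Matrix (Fin n) (Fin n) ℝ) (x : Fin n → ℝ) : ℝ :=
  Real.sqrt (x ⬝ᵥ W.mulVec x)
noncomputable def enorm' {n : ℕ} (x : Fin n → ℝ) : ℝ := Real.sqrt (x ⬝ᵥ x)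
noncomputable def opNorm {m n : ℕ} (A : Matrix (Fin m) (Fin n) ℝ) : ℝ :=
  ‖LinearMap.toContinuousLinearMap (Matrix.toEuclideanLin A)‖

noncomputable def toE {n : ℕ} (x : Fin n → ℝ) : EuclideanSpace ℝ (Fin n) :=
  (WithLp.equiv 2 _).symm x

lemma toE_add {n : ℕ} (x y : Fin n → ℝ) : toE (x + y) = toE x + toE y := rfl
lemma toE_sub {n : ℕ} (x y : Fin n → ℝ) : toE (x - y) = toE x - toE y := rfl
lemma toE_smul {n : ℕ} (c : ℝ) (x : Fin n → ℝ) : toE (c • x) = c • toE x := rfl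
lemma toE_neg {n : ℕ} (x : Fin n → ℝ) : toE (-x) = - toE x := rfl

lemma dot_eq_inner {n : ℕ} (x y : Fin n → ℝ) : x ⬝ᵥ y = (inner ℝ (toE x) (toE y) : ℝ) := by
  simp [dotProduct, PiLp.inner_apply, toE, RCLike.inner_apply, mul_comm]

lemma enorm'_eq_norm {n : ℕ} (x : Fin n → ℝ) : enorm' x = ‖toE x‖ := by
  rw [enorm', dot_eq_inner, real_inner_self_eq_norm_sq, Real.sqrt_sq (norm_nonneg _)]

lemma opNorm_mulVec_le {m n : ℕ} (A : Matrix (Fin m) (Fin n) ℝ) (x : Fin n → ℝ) :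
    ‖toE (A.mulVec x)‖ ≤ opNorm A * ‖toE x‖ := by
  have h : toE (A.mulVec x)
      = (LinearMap.toContinuousLinearMap (Matrix.toEuclideanLin A)) (toE x) := rfl
  rw [h]
  exact (LinearMap.toContinuousLinearMap (Matrix.toEuclideanLin A)).le_opNorm _

section withS
variable {n : ℕ} {W S : Matrix (Fin n) (Fin n) ℝ}

lemma wip_eq_inner (hSsymm : Sᵀ = S) (hSW : S * S = W) (x y : Fin n → ℝ) :
    wip W x y = (inner ℝ (toE (S.mulVec x)) (toE (S.mulVec y)) : ℝ) := by
  rw [wip, ← hSW, ← Matrix.mulVec_mulVec, Matrix.dotProduct_mulVec, ← Matrix.mulVec_transpose,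
    hSsymm, dot_eq_inner]

lemma wnorm_eq_norm (hSsymm : Sᵀ = S) (hSW : S * S = W) (x : Fin n → ℝ) :
    wnorm W x = ‖toE (S.mulVec x)‖ := by
  rw [wnorm, show x ⬝ᵥ W.mulVec x = wip W x x from rfl, wip_eq_inner hSsymm hSW,
    real_inner_self_eq_norm_sq, Real.sqrt_sq (norm_nonneg _)]

lemma wip_winv_right (hWinv : W * W⁻¹ = 1) (e x : Fin n → ℝ) :
    wip W e (W⁻¹.mulVec x) = e ⬝ᵥ x := by
  rw [wip, Matrix.mulVec_mulVec, hWinv, Matrix.one_mulVec]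

/-- Variational characterization of the W-projection onto a convex set. -/
lemma proj_vi (hSsymm : Sᵀ = S) (hSW : S * S = W)
    {X : Set (Fin n → ℝ)} (hXconv : Convex ℝ X) (z p : Fin n → ℝ) (hp : p ∈ X)
    (hmin : ∀ v ∈ X, wnorm W (p - z) ≤ wnorm W (v - z)) :
    ∀ v ∈ X, 0 ≤ wip W (p - z) (v - p) := by
  intro v hv
  set a : EuclideanSpace ℝ (Fin n) := toE (S.mulVec (p - z)) with ha
  set b : EuclideanSpace ℝ (Fin n) := toE (S.mulVec (v - p)) with hb
  have key : ∀ t : ℝ, t ∈ Set.Ioc (0:ℝ) 1 → 0 ≤ 2 * (inner ℝ a b : ℝ) + t * ‖b‖ ^ 2 := by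
    intro t ⟨ht0, ht1⟩
    have hvt : p + t • (v - p) ∈ X := by
      have := hXconv hp hv (by linarith : (0:ℝ) ≤ 1 - t) ht0.le (by ring)
      convert this using 1
      module
    have hle := hmin _ hvt
    have hid : (p + t • (v - p)) - z = (p - z) + t • (v - p) := by module
    rw [hid] at hle
    rw [wnorm_eq_norm hSsymm hSW, wnorm_eq_norm hSsymm hSW] at hle
    have hSe : S.mulVec ((p - z) + t • (v - p)) = S.mulVec (p - z) + t • S.mulVec (v - p) := by
      rw [Matrix.mulVec_add, Matrix.mulVec_smul]
    rw [hSe, toE_add, toE_smul, ← ha, ← hb] at hle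
    have hle' : ‖a‖ ≤ ‖a + t • b‖ := by rw [ha]; exact hle
    have hsq : ‖a‖ ^ 2 ≤ ‖a + t • b‖ ^ 2 :=
      pow_le_pow_left₀ (norm_nonneg _) hle' 2
    have hexp : ‖a + t • b‖ ^ 2 = ‖a‖ ^ 2 + 2 * (t * (inner ℝ a b : ℝ)) + t ^ 2 * ‖b‖ ^ 2 := by
      rw [norm_add_sq_real, real_inner_smul_right, norm_smul]
      simp only [Real.norm_eq_abs, mul_pow, sq_abs]
    rw [hexp] at hsq
    nlinarith [ht0]
  have hab : 0 ≤ (inner ℝ a b : ℝ) := by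
    by_contra hneg
    push_neg at hneg
    rcases eq_or_lt_of_le (sq_nonneg ‖b‖) with hB | hB
    · have := key 1 ⟨one_pos, le_refl 1⟩
      nlinarith
    · set t : ℝ := min 1 (-(inner ℝ a b : ℝ) / ‖b‖ ^ 2) with htdef
      have ht0 : 0 < t := lt_min one_pos (div_pos (by linarith) hB)
      have ht1 : t ≤ 1 := min_le_left _ _
      have h2 : t * ‖b‖ ^ 2 ≤ -(inner ℝ a b : ℝ) := by
        have : t ≤ -(inner ℝ a b : ℝ) / ‖b‖ ^ 2 := min_le_right _ _
        calc t * ‖b‖ ^ 2 ≤ (-(inner ℝ a b : ℝ) / ‖b‖ ^ 2) * ‖b‖ ^ 2 := by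
              exact mul_le_mul_of_nonneg_right this hB.le
          _ = -(inner ℝ a b : ℝ) := div_mul_cancel₀ _ hB.ne'
      have := key t ⟨ht0, ht1⟩
      linarith
  have : wip W (p - z) (v - p) = (inner ℝ a b : ℝ) := wip_eq_inner hSsymm hSW _ _
  linarith [this ▸ hab]

end withS
set_option maxHeartbeats 1000000 in
theorem closed_loop_iss {n m : ℕ}
    (G : Matrix (Fin m) (Fin n) ℝ) (w : Fin m → ℝ)
    (D : Set (Fin m → ℝ)) (hD : Bornology.IsBounded D)
    (U : Set (Fin n → ℝ)) (Y : Set (Fin m → ℝ))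
    (X : Set (Fin n → ℝ)) (hXne : X.Nonempty) (hXcl : IsClosed X) (hXconv : Convex ℝ X)
    (hXU : ∀ u ∈ X, u ∈ U ∧ ∀ d ∈ D, G.mulVec u + w + d ∈ Y)
    (W : Matrix (Fin n) (Fin n) ℝ) (hW : W.PosDef)
    (S : Matrix (Fin n) (Fin n) ℝ) (hS : S.PosDef) (hSsq : S * S = W)
    (M : Matrix (Fin m) (Fin n) ℝ) (Q : Matrix (Fin m) (Fin m) ℝ)
    (Ht : Matrix (Fin n) (Fin n) ℝ) (ft : Fin n → ℝ)
    (μt Lt : ℝ) (hμ : 0 < μt) (hL : 0 < Lt)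
    (hmono : ∀ d : Fin n → ℝ, μt * (wnorm W d) ^ 2 ≤ d ⬝ᵥ Ht.mulVec d)
    (hlip : ∀ d : Fin n → ℝ, wnorm W (W⁻¹.mulVec (Ht.mulVec d)) ≤ Lt * wnorm W d)
    (α : ℝ) (hα : α ∈ Set.Ioo 0 (2 * μt / Lt ^ 2))
    (ubar : Fin n → ℝ) (hubar : ubar ∈ X)
    (hVI : ∀ v ∈ X, 0 ≤ (Ht.mulVec ubar + ft) ⬝ᵥ (v - ubar))
    (d : ℕ → Fin m → ℝ) (hd : ∀ k, d k ∈ D)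
    (u : ℕ → Fin n → ℝ) (hu0 : u 0 ∈ X)
    (hproj : ∀ k, u (k + 1) ∈ X ∧ ∀ v ∈ X,
      wnorm W (u (k + 1) -
          (u k - α • W⁻¹.mulVec ((Ht.mulVec (u k) + ft) + (Mᵀ * Q).mulVec (d k))))
        ≤ wnorm W (v -
          (u k - α • W⁻¹.mulVec ((Ht.mulVec (u k) + ft) + (Mᵀ * Q).mulVec (d k))))) :
    0 ≤ Real.sqrt (1 - 2 * α * μt + α ^ 2 * Lt ^ 2) ∧
    Real.sqrt (1 - 2 * α * μt + α ^ 2 * Lt ^ 2) < 1 ∧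
    ∀ k : ℕ, u k ∈ U ∧ G.mulVec (u k) + w + d k ∈ Y ∧
      wnorm W (u k - ubar)
        ≤ (Real.sqrt (1 - 2 * α * μt + α ^ 2 * Lt ^ 2)) ^ k * wnorm W (u 0 - ubar)
          + (α * opNorm (S⁻¹ * (Mᵀ * Q)) / (1 - Real.sqrt (1 - 2 * α * μt + α ^ 2 * Lt ^ 2)))
            * ⨆ j : ℕ, enorm' (d j) := by
  obtain ⟨hα0, hα2⟩ := hα
  have hSsymm : Sᵀ = S := by
    ext i j
    have h := congrFun (congrFun hS.1 i) j
    simpa [Matrix.conjTranspose_apply] using h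
  have hSdet : IsUnit S.det := isUnit_iff_ne_zero.mpr hS.det_pos.ne'
  have hWdet : IsUnit W.det := isUnit_iff_ne_zero.mpr hW.det_pos.ne'
  have hSS : S * S⁻¹ = 1 := Matrix.mul_nonsing_inv _ hSdet
  have hWW : W * W⁻¹ = 1 := Matrix.mul_nonsing_inv _ hWdet
  have hSWinv : S * W⁻¹ = S⁻¹ := by
    rw [← hSsq, Matrix.mul_inv_rev, ← Matrix.mul_assoc, hSS, Matrix.one_mul]
  set r : ℝ := 1 - 2 * α * μt + α ^ 2 * Lt ^ 2 with hrdef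
  set η : ℝ := Real.sqrt r with hηdef
  have hη0 : 0 ≤ η := Real.sqrt_nonneg _
  have hr1 : r < 1 := by
    have hL2 : 0 < Lt ^ 2 := pow_pos hL 2
    have h2 : α * Lt ^ 2 < 2 * μt := (lt_div_iff₀ hL2).mp hα2
    have := mul_lt_mul_of_pos_left h2 hα0
    rw [hrdef]; nlinarith
  have hη1 : η < 1 := by
    rw [hηdef]
    exact (Real.sqrt_lt' one_pos).mpr (by rw [one_pow]; exact hr1)
  set Φ : (Fin n → ℝ) → EuclideanSpace ℝ (Fin n) := fun x => toE (S.mulVec x) with hΦ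
  have hwn : ∀ x, wnorm W x = ‖Φ x‖ := fun x => wnorm_eq_norm hSsymm hSsq x
  have hΦsub : ∀ x y, Φ (x - y) = Φ x - Φ y := fun x y => by
    simp only [hΦ, Matrix.mulVec_sub, toE_sub]
  have hΦadd : ∀ x y, Φ (x + y) = Φ x + Φ y := fun x y => by
    simp only [hΦ, Matrix.mulVec_add, toE_add]
  have hΦsmul : ∀ (t : ℝ) x, Φ (t • x) = t • Φ x := fun t x => by
    simp only [hΦ, Matrix.mulVec_smul, toE_smul]
  have hX : ∀ k, u k ∈ X := by
    intro k
    induction k with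
    | zero => exact hu0
    | succ k _ => exact (hproj k).1
  set c : ℝ := opNorm (S⁻¹ * (Mᵀ * Q)) with hcdef
  have hc0 : 0 ≤ c := norm_nonneg _
  set Dsup : ℝ := ⨆ j, enorm' (d j) with hDsdef
  obtain ⟨R, hR⟩ := isBounded_iff_forall_norm_le.mp hD
  have hbdd : BddAbove (Set.range fun j => enorm' (d j)) := by
    refine ⟨Real.sqrt (m * R ^ 2), ?_⟩
    rintro x ⟨j, rfl⟩
    show enorm' (d j) ≤ Real.sqrt (m * R ^ 2)
    rw [show enorm' (d j) = Real.sqrt (d j ⬝ᵥ d j) from rfl]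
    apply Real.sqrt_le_sqrt
    calc d j ⬝ᵥ d j = ∑ i, d j i * d j i := rfl
      _ ≤ ∑ _i : Fin m, R ^ 2 := by
          apply Finset.sum_le_sum
          intro i _
          have h1 : ‖d j i‖ ≤ ‖d j‖ := norm_le_pi_norm (d j) i
          have h2 : ‖d j‖ ≤ R := hR _ (hd j)
          rw [Real.norm_eq_abs] at h1
          nlinarith [abs_nonneg (d j i), neg_abs_le (d j i), le_abs_self (d j i)]
      _ = m * R ^ 2 := by
          rw [Finset.sum_const, Finset.card_univ, Fintype.card_fin, nsmul_eq_mul]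
  have hDle : ∀ j, enorm' (d j) ≤ Dsup := fun j => le_ciSup hbdd j
  have hD0 : 0 ≤ Dsup := Real.iSup_nonneg fun j => Real.sqrt_nonneg _
  have hen0 : ∀ j, 0 ≤ enorm' (d j) := fun j => Real.sqrt_nonneg _
  have key : ∀ k, wnorm W (u (k + 1) - ubar)
      ≤ η * wnorm W (u k - ubar) + (α * c) * enorm' (d k) := by
    intro k
    have hvi := proj_vi hSsymm hSsq hXconv _ _ (hproj k).1 (hproj k).2
    have hviu := hvi ubar hubar
    set p := u (k + 1) with hp
    set e := u k - ubar with he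
    set g := (Ht.mulVec (u k) + ft) + (Mᵀ * Q).mulVec (d k) with hg
    set z := u k - α • W⁻¹.mulVec g with hz
    set q := p - ubar with hq
    set A := W⁻¹.mulVec (Ht.mulVec ubar + ft) with hA
    set B := W⁻¹.mulVec ((Mᵀ * Q).mulVec (d k)) with hB
    set v := e - α • W⁻¹.mulVec (Ht.mulVec e) with hv
    clear_value p e g z q A B v
    have hdec : z - ubar = v - α • A - α • B := by
      rw [hz, hg, hv, he, hA, hB]
      have huk : Ht.mulVec (u k) = Ht.mulVec (u k - ubar) + Ht.mulVec ubar := by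
        rw [← Matrix.mulVec_add, sub_add_cancel]
      rw [huk]
      simp only [Matrix.mulVec_add]
      module
    -- first term nonpositive
    have h1 : (inner ℝ (Φ (p - z)) (Φ q) : ℝ) ≤ 0 := by
      have heq : wip W (p - z) (ubar - p) = (inner ℝ (Φ (p - z)) (Φ (ubar - p)) : ℝ) :=
        wip_eq_inner hSsymm hSsq _ _
      have hneg : Φ (ubar - p) = -Φ q := by
        rw [hΦsub, hq, hΦsub]; abel
      rw [heq, hneg, inner_neg_right] at hviu
      linarith
    -- middle term
    have hmid : 0 ≤ (inner ℝ (Φ A) (Φ q) : ℝ) := by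
      have heq : (inner ℝ (Φ q) (Φ A) : ℝ) = q ⬝ᵥ (Ht.mulVec ubar + ft) := by
        rw [hA, ← wip_eq_inner hSsymm hSsq, wip_winv_right hWW]
      have hvi2 := hVI p (by rw [hp]; exact hX (k + 1))
      rw [real_inner_comm, heq, dotProduct_comm, hq]
      exact hvi2
    -- disturbance term
    have hdist : ‖Φ B‖ ≤ c * enorm' (d k) := by
      have heq : Φ B = toE ((S⁻¹ * (Mᵀ * Q)).mulVec (d k)) := by
        simp only [hΦ, hB, Matrix.mulVec_mulVec, ← Matrix.mul_assoc, hSWinv]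
      rw [heq, enorm'_eq_norm]
      exact opNorm_mulVec_le _ _
    -- contraction
    have hcontr : ‖Φ v‖ ≤ η * ‖Φ e‖ := by
      set hvec := Φ (W⁻¹.mulVec (Ht.mulVec e)) with hhv
      have hΦv : Φ v = Φ e - α • hvec := by rw [hv, hΦsub, hΦsmul, hhv]
      have hexp : ‖Φ v‖ ^ 2 = ‖Φ e‖ ^ 2 - 2 * (α * (inner ℝ (Φ e) hvec : ℝ)) + α ^ 2 * ‖hvec‖ ^ 2 := by
        rw [hΦv, norm_sub_sq_real, real_inner_smul_right, norm_smul]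
        simp only [Real.norm_eq_abs, mul_pow, sq_abs]
      have hinner : (inner ℝ (Φ e) hvec : ℝ) = e ⬝ᵥ Ht.mulVec e := by
        rw [hhv, ← wip_eq_inner hSsymm hSsq, wip_winv_right hWW]
      have hm := hmono e
      rw [hwn] at hm
      have hl := hlip e
      rw [hwn, hwn] at hl
      have hl2 : ‖hvec‖ ^ 2 ≤ Lt ^ 2 * ‖Φ e‖ ^ 2 := by
        nlinarith [norm_nonneg hvec, norm_nonneg (Φ e), hL.le]
      rw [hinner] at hexp
      have hsq : ‖Φ v‖ ^ 2 ≤ r * ‖Φ e‖ ^ 2 := by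
        rw [hexp, hrdef]
        have t1 : 2 * α * (μt * ‖Φ e‖ ^ 2) ≤ 2 * α * (e ⬝ᵥ Ht.mulVec e) :=
          mul_le_mul_of_nonneg_left hm (by positivity)
        have t2 : α ^ 2 * ‖hvec‖ ^ 2 ≤ α ^ 2 * (Lt ^ 2 * ‖Φ e‖ ^ 2) :=
          mul_le_mul_of_nonneg_left hl2 (sq_nonneg α)
        nlinarith [t1, t2]
      rcases eq_or_lt_of_le (norm_nonneg (Φ e)) with h0 | h0
      · have h00 : ‖Φ v‖ ^ 2 ≤ 0 := by
          rw [← h0] at hsq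
          simpa using hsq
        have hz0 : ‖Φ v‖ = 0 := by nlinarith [norm_nonneg (Φ v)]
        rw [hz0, ← h0, mul_zero]
      · have hr0 : 0 ≤ r := by nlinarith [sq_nonneg ‖Φ v‖, pow_pos h0 2]
        have hle : ‖Φ v‖ ≤ Real.sqrt (r * ‖Φ e‖ ^ 2) := by
          rw [← Real.sqrt_sq (norm_nonneg (Φ v))]
          exact Real.sqrt_le_sqrt hsq
        rwa [Real.sqrt_mul hr0, Real.sqrt_sq (norm_nonneg _), ← hηdef] at hle
    -- combine
    have hmain : ‖Φ q‖ ^ 2 ≤ (η * ‖Φ e‖ + α * c * enorm' (d k)) * ‖Φ q‖ := by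
      have harg : (p - z) + (z - ubar) = p - ubar := by module
      have hq' : Φ q = Φ (p - z) + Φ (z - ubar) := by
        rw [← hΦadd, harg, hq]
      have hzΦ : Φ (z - ubar) = Φ v - α • Φ A - α • Φ B := by
        rw [hdec, hΦsub, hΦsub, hΦsmul, hΦsmul]
      have e1 : ‖Φ q‖ ^ 2 = (inner ℝ (Φ q) (Φ q) : ℝ) := (real_inner_self_eq_norm_sq _).symm
      have e2 : (inner ℝ (Φ q) (Φ q) : ℝ)
          = (inner ℝ (Φ (p - z)) (Φ q) : ℝ) + ((inner ℝ (Φ v) (Φ q) : ℝ)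
            - α * (inner ℝ (Φ A) (Φ q) : ℝ) - α * (inner ℝ (Φ B) (Φ q) : ℝ)) := by
        nth_rewrite 1 [hq']
        rw [inner_add_left, hzΦ, inner_sub_left, inner_sub_left,
          real_inner_smul_left, real_inner_smul_left]
      have b1 : (inner ℝ (Φ v) (Φ q) : ℝ) ≤ η * ‖Φ e‖ * ‖Φ q‖ := by
        calc (inner ℝ (Φ v) (Φ q) : ℝ) ≤ ‖Φ v‖ * ‖Φ q‖ := real_inner_le_norm _ _
          _ ≤ η * ‖Φ e‖ * ‖Φ q‖ := mul_le_mul_of_nonneg_right hcontr (norm_nonneg _)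
      have b2 : 0 ≤ α * (inner ℝ (Φ A) (Φ q) : ℝ) := mul_nonneg hα0.le hmid
      have b3 : -(α * (inner ℝ (Φ B) (Φ q) : ℝ)) ≤ α * c * enorm' (d k) * ‖Φ q‖ := by
        have habs : |(inner ℝ (Φ B) (Φ q) : ℝ)| ≤ ‖Φ B‖ * ‖Φ q‖ := abs_real_inner_le_norm _ _
        have h4 : -(inner ℝ (Φ B) (Φ q) : ℝ) ≤ ‖Φ B‖ * ‖Φ q‖ := by
          have := neg_abs_le (inner ℝ (Φ B) (Φ q) : ℝ)
          linarith
        have h5 : ‖Φ B‖ * ‖Φ q‖ ≤ c * enorm' (d k) * ‖Φ q‖ :=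
          mul_le_mul_of_nonneg_right hdist (norm_nonneg _)
        calc -(α * (inner ℝ (Φ B) (Φ q) : ℝ)) = α * (-(inner ℝ (Φ B) (Φ q) : ℝ)) := by ring
          _ ≤ α * (c * enorm' (d k) * ‖Φ q‖) :=
              mul_le_mul_of_nonneg_left (le_trans h4 h5) hα0.le
          _ = α * c * enorm' (d k) * ‖Φ q‖ := by ring
      rw [e1, e2]
      nlinarith [h1]
    have hK0 : 0 ≤ η * ‖Φ e‖ + α * c * enorm' (d k) :=
      add_nonneg (mul_nonneg hη0 (norm_nonneg _))
        (mul_nonneg (mul_nonneg hα0.le hc0) (hen0 k))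
    have hqK : ‖Φ q‖ ≤ η * ‖Φ e‖ + α * c * enorm' (d k) := by
      nlinarith [norm_nonneg (Φ q), hmain]
    rw [hwn, hwn]
    calc ‖Φ q‖ ≤ η * ‖Φ e‖ + α * c * enorm' (d k) := hqK
      _ = η * ‖Φ e‖ + (α * c) * enorm' (d k) := by ring
  clear_value Φ
  set γ : ℝ := α * c / (1 - η) with hγdef
  have h1η : (0:ℝ) < 1 - η := by linarith
  have hγeq : η * γ + α * c = γ := by
    rw [hγdef]
    field_simp
    ring
  have hγ0 : 0 ≤ γ := div_nonneg (mul_nonneg hα0.le hc0) h1η.le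
  have hbound : ∀ k, wnorm W (u k - ubar) ≤ η ^ k * wnorm W (u 0 - ubar) + γ * Dsup := by
    intro k
    induction k with
    | zero =>
        rw [pow_zero, one_mul]
        nlinarith [mul_nonneg hγ0 hD0]
    | succ k ih =>
        calc wnorm W (u (k + 1) - ubar)
            ≤ η * wnorm W (u k - ubar) + (α * c) * enorm' (d k) := key k
          _ ≤ η * (η ^ k * wnorm W (u 0 - ubar) + γ * Dsup) + (α * c) * Dsup := by
              have i1 := mul_le_mul_of_nonneg_left ih hη0
              have i2 := mul_le_mul_of_nonneg_left (hDle k) (mul_nonneg hα0.le hc0)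
              linarith
          _ = η ^ (k + 1) * wnorm W (u 0 - ubar) + (η * γ + α * c) * Dsup := by ring
          _ = η ^ (k + 1) * wnorm W (u 0 - ubar) + γ * Dsup := by rw [hγeq]
  exact ⟨hη0, hη1, fun k => ⟨(hXU _ (hX k)).1, (hXU _ (hX k)).2 _ (hd k), hbound k⟩⟩
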